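/- Let a_k = (1/(2^k·k!))·[d^{2k}/dz^{2k} (z²/(2(e^z − 1 − z)))^{k+1/2}]_{z=0}. Then a_0 = 1, a_1 = 1/12, a_2 = 1/288, and a_3 = −139/51840. -/

import Mathlib

noncomputable def a (k : ℕ) : ℝ :=
  (1 / (2 ^ k * Nat.factorial k)) *
    iteratedDeriv (2 * k)
      (fun z : ℝ =>
        (if z = 0 then 1 else z ^ 2 / (2 * (Real.exp z - 1 - z))) ^ ((k : ℝ) + 1 / 2)) 0

open Finset FormalMultilinearSeries Filter
open scoped ContDiff

set_option linter.unusedTactic false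
set_option linter.unreachableTactic false
set_option maxHeartbeats 1000000



noncomputable def pE : FormalMultilinearSeries ℝ ℝ ℝ :=
  FormalMultilinearSeries.ofScalars ℝ (fun n => (1 : ℝ) / (n + 2).factorial)

lemma pE_radius : pE.radius = ⊤ := by
  apply FormalMultilinearSeries.ofScalars_radius_eq_top_of_tendsto
  · exact Eventually.of_forall fun n => by positivity
  · have h : (fun n : ℕ => ‖(1 : ℝ) / ((n.succ) + 2).factorial‖ / ‖(1 : ℝ) / (n + 2).factorial‖)
        = fun n : ℕ => 1 / ((n : ℝ) + 3) := by
      funext n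
      have h1 : (0:ℝ) < (n + 2).factorial := by positivity
      have h2 : ((n.succ + 2).factorial : ℝ) = (n + 3) * (n + 2).factorial := by
        have : n.succ + 2 = (n + 2) + 1 := by omega
        rw [this, Nat.factorial_succ]
        push_cast; ring
      rw [norm_div, norm_div]
      simp only [norm_one, Real.norm_natCast]
      rw [h2]
      field_simp
    rw [h]
    have := tendsto_one_div_add_atTop_nhds_zero_nat (𝕜 := ℝ)
    have h3 : Tendsto (fun n : ℕ => ((n : ℝ) + 3)) atTop atTop := by
      apply tendsto_atTop_add_const_right
      exact tendsto_natCast_atTop_atTop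
    simpa [Pi.inv_def] using h3.inv_tendsto_atTop

noncomputable def E : ℝ → ℝ := pE.sum

lemma hE_ball : HasFPowerSeriesOnBall E pE 0 ⊤ := by
  have := pE.hasFPowerSeriesOnBall (by rw [pE_radius]; exact ENNReal.zero_lt_top)
  simpa [pE_radius, E] using this

lemma E_deriv (n : ℕ) : iteratedDeriv n E 0 = (n.factorial : ℝ) / (n + 2).factorial := by
  have h := hE_ball.factorial_smul (1 : ℝ) n
  rw [iteratedDeriv_eq_iteratedFDeriv, ← h]
  rw [pE, FormalMultilinearSeries.ofScalars_apply_eq]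
  simp [smul_eq_mul, mul_comm, mul_div_assoc]
  rw [div_eq_mul_inv]

lemma E_sum (z : ℝ) : E z = ∑' n : ℕ, z ^ n / (n + 2).factorial := by
  rw [E, FormalMultilinearSeries.sum]
  congr 1
  funext n
  rw [pE, FormalMultilinearSeries.ofScalars_apply_eq]
  simp [smul_eq_mul, div_eq_mul_inv, mul_comm]

lemma E_summable (z : ℝ) : Summable (fun n : ℕ => z ^ n / ((n + 2).factorial : ℝ)) := by
  apply Summable.of_norm
  apply Summable.of_nonneg_of_le (fun n => norm_nonneg _)
    (fun n => ?_) (Real.summable_pow_div_factorial |z|)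
  rw [norm_div, norm_pow]
  simp only [Real.norm_natCast]
  gcongr
  exact (Real.norm_eq_abs z).le
  omega

lemma E_key (z : ℝ) : z ^ 2 * E z = Real.exp z - 1 - z := by
  have hexp : Real.exp z = ∑' n : ℕ, z ^ n / n.factorial := by
    rw [Real.exp_eq_exp_ℝ, NormedSpace.exp_eq_tsum_div]
  have hs : Summable (fun n : ℕ => z ^ n / n.factorial) := Real.summable_pow_div_factorial z
  rw [E_sum]
  rw [← tsum_mul_left]
  have h1 : ∑' n : ℕ, z ^ n / n.factorial
      = 1 + z + ∑' n : ℕ, z ^ (n + 2) / ((n + 2).factorial : ℝ) := by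
    rw [Summable.tsum_eq_zero_add hs]
    have hs1 : Summable (fun n : ℕ => z ^ (n + 1) / ((n + 1).factorial : ℝ)) :=
      hs.comp_injective (add_left_injective 1)
    rw [Summable.tsum_eq_zero_add hs1]
    simp [Nat.factorial]
    ring
  have h2 : ∀ n : ℕ, z ^ 2 * (z ^ n / (n + 2).factorial) = z ^ (n + 2) / ((n + 2).factorial : ℝ) := by
    intro n; ring
  rw [hexp, h1]
  simp_rw [h2]
  ring

lemma E_pos (z : ℝ) : 0 < E z := by
  rcases eq_or_ne z 0 with rfl | hz
  · have h0 : E 0 = ∑' n : ℕ, (0:ℝ) ^ n / (n + 2).factorial := E_sum 0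
    rw [tsum_eq_single 0 (by intro n hn; simp [pow_eq_zero_iff, hn])] at h0
    rw [h0]; norm_num
  · have h1 : 0 < Real.exp z - 1 - z := by
      have := Real.add_one_lt_exp hz
      linarith
    have h2 := E_key z
    have hz2 : 0 < z ^ 2 := by positivity
    nlinarith [E_key z]



lemma iteratedDeriv_add' (n : ℕ) (f g : ℝ → ℝ) (hf : ContDiff ℝ ∞ f) (hg : ContDiff ℝ ∞ g)
    (x : ℝ) :
    iteratedDeriv n (fun z => f z + g z) x = iteratedDeriv n f x + iteratedDeriv n g x := by
  rw [← iteratedDerivWithin_univ, ← iteratedDerivWithin_univ, ← iteratedDerivWithin_univ]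
  have h : (fun z => f z + g z) = f + g := rfl
  rw [h]
  exact iteratedDerivWithin_add (Set.mem_univ x) uniqueDiffOn_univ
    ((hf.of_le (by exact_mod_cast (le_top : (n : ℕ∞) ≤ ⊤))).contDiffWithinAt)
    ((hg.of_le (by exact_mod_cast (le_top : (n : ℕ∞) ≤ ⊤))).contDiffWithinAt)

lemma iteratedDeriv_mul' (n : ℕ) : ∀ (f g : ℝ → ℝ), ContDiff ℝ ∞ f → ContDiff ℝ ∞ g → ∀ x : ℝ,
    iteratedDeriv n (fun z => f z * g z) x
      = ∑ i ∈ range (n + 1),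
          (n.choose i : ℝ) * iteratedDeriv i f x * iteratedDeriv (n - i) g x := by
  induction n with
  | zero => intro f g hf hg x; simp
  | succ n ih =>
    intro f g hf hg x
    have hf' : ContDiff ℝ ∞ (deriv f) := (contDiff_infty_iff_deriv.mp hf).2
    have hg' : ContDiff ℝ ∞ (deriv g) := (contDiff_infty_iff_deriv.mp hg).2
    have hd : deriv (fun z => f z * g z) = fun z => deriv f z * g z + f z * deriv g z := by
      funext z
      exact deriv_fun_mul (hf.differentiable (by simp) z)
        (hg.differentiable (by simp) z)
    rw [iteratedDeriv_succ', hd]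
    rw [iteratedDeriv_add' n _ _ ((hf'.mul hg)) ((hf.mul hg')) x]
    rw [ih (deriv f) g hf' hg x, ih f (deriv g) hf hg' x]
    have e1 : ∀ i, iteratedDeriv i (deriv f) x = iteratedDeriv (i + 1) f x := by
      intro i; rw [iteratedDeriv_succ']
    have e2 : ∀ i, iteratedDeriv i (deriv g) x = iteratedDeriv (i + 1) g x := by
      intro i; rw [iteratedDeriv_succ']
    simp_rw [e1, e2]
    -- Pascal shuffle
    set u := fun i => iteratedDeriv i f x with hu
    set v := fun i => iteratedDeriv i g x with hv
    have key : ∑ i ∈ range (n + 1), (n.choose i : ℝ) * u (i + 1) * v (n - i)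
        + ∑ i ∈ range (n + 1), (n.choose i : ℝ) * u i * v (n - i + 1)
        = ∑ i ∈ range (n + 2), ((n + 1).choose i : ℝ) * u i * v (n + 1 - i) := by
      rw [Finset.sum_range_succ' (fun i => ((n + 1).choose i : ℝ) * u i * v (n + 1 - i)) (n + 1)]
      rw [Finset.sum_range_succ' (fun i => (n.choose i : ℝ) * u i * v (n - i + 1)) n]
      have ext : ∑ i ∈ range n, (n.choose (i + 1) : ℝ) * u (i + 1) * v (n - (i + 1) + 1)
          = ∑ i ∈ range (n + 1), (n.choose (i + 1) : ℝ) * u (i + 1) * v (n - i) := by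
        rw [Finset.sum_range_succ]
        simp only [Nat.choose_succ_self, Nat.cast_zero, zero_mul]
        rw [add_zero]
        apply Finset.sum_congr rfl
        intro i hi
        simp only [Finset.mem_range] at hi
        congr 2
        omega
      rw [ext]
      have pascal : ∀ i ∈ range (n + 1),
          ((n + 1).choose (i + 1) : ℝ) * u (i + 1) * v (n + 1 - (i + 1))
          = (n.choose i : ℝ) * u (i + 1) * v (n - i)
            + (n.choose (i + 1) : ℝ) * u (i + 1) * v (n - i) := by
        intro i hi
        rw [Nat.choose_succ_succ]
        have h3 : n + 1 - (i + 1) = n - i := by omega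
        rw [h3]
        push_cast
        ring
      rw [Finset.sum_congr rfl pascal, Finset.sum_add_distrib]
      simp
      ring
    exact key



lemma E_zero : E 0 = 1 / 2 := by
  have h := E_deriv 0
  simpa [Nat.factorial] using h

lemma hE_cd : ContDiff ℝ ∞ E := by
  apply AnalyticOnNhd.contDiff
  have := hE_ball.analyticOnNhd
  have hb : Metric.eball (0:ℝ) ⊤ = Set.univ := by
    ext y; simp [Metric.mem_eball]
  rwa [hb] at this

lemma twoE_pos (z : ℝ) : 0 < 2 * E z := by linarith [E_pos z]
lemma twoE_ne (z : ℝ) : 2 * E z ≠ 0 := ne_of_gt (twoE_pos z)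

lemma base_eq (z : ℝ) :
    (if z = 0 then (1:ℝ) else z ^ 2 / (2 * (Real.exp z - 1 - z))) = (2 * E z)⁻¹ := by
  rcases eq_or_ne z 0 with rfl | hz
  · simp [E_zero]
  · rw [if_neg hz, ← E_key z]
    have hz2 : z ^ 2 ≠ 0 := pow_ne_zero _ hz
    field_simp [hz2, (E_pos z).ne']

noncomputable def Q (m : ℕ) : ℝ → ℝ := fun z => (2 * E z) ^ m

lemma hQ (m : ℕ) : ContDiff ℝ ∞ (Q m) := (contDiff_const.mul hE_cd).pow m

lemma hQpos (m : ℕ) (z : ℝ) : 0 < Q m z := pow_pos (twoE_pos z) m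

noncomputable def fk (r : ℝ) : ℝ → ℝ := fun z => ((2 * E z)⁻¹) ^ r

lemma hfk_cd (r : ℝ) : ContDiff ℝ ∞ (fk r) := by
  rw [contDiff_iff_contDiffAt]
  intro z
  apply ContDiffAt.rpow_const_of_ne
  · exact ((contDiff_const.mul hE_cd).contDiffAt).inv (twoE_ne z)
  · exact ne_of_gt (inv_pos.mpr (twoE_pos z))

lemma fk_zero (r : ℝ) : fk r 0 = 1 := by
  simp [fk, E_zero]

lemma fk_sq (r : ℝ) (m : ℕ) (hrm : r + r = (m : ℝ)) (z : ℝ) :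
    fk r z * fk r z * Q m z = 1 := by
  have hpos : 0 < (2 * E z)⁻¹ := inv_pos.mpr (twoE_pos z)
  have h1 : fk r z * fk r z = ((2 * E z)⁻¹) ^ (m : ℕ) := by
    rw [fk, ← Real.rpow_add hpos, hrm, Real.rpow_natCast]
  rw [h1, Q, inv_pow]
  exact inv_mul_cancel₀ (pow_ne_zero _ (twoE_ne z))

lemma it_const_one (n : ℕ) (hn : n ≠ 0) (x : ℝ) :
    iteratedDeriv n (fun _ : ℝ => (1:ℝ)) x = 0 := by
  rw [iteratedDeriv_eq_iteratedFDeriv, iteratedFDeriv_const_of_ne hn]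
  simp


lemma it_const (c : ℝ) (n : ℕ) (hn : n ≠ 0) (x : ℝ) :
    iteratedDeriv n (fun _ : ℝ => c) x = 0 := by
  rw [iteratedDeriv_eq_iteratedFDeriv, iteratedFDeriv_const_of_ne hn]
  simp

lemma Q_mul (a b : ℕ) : Q (a + b) = fun z => Q a z * Q b z := by
  funext z; simp [Q, pow_add]

lemma Q1_deriv (n : ℕ) :
    iteratedDeriv n (Q 1) 0 = 2 * n.factorial / (n + 2).factorial := by
  have h : Q 1 = fun z => (fun _ : ℝ => (2:ℝ)) z * E z := by
    funext z; simp [Q]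
  rw [h, iteratedDeriv_mul' n _ E contDiff_const hE_cd 0]
  rw [Finset.sum_eq_single 0]
  · simp [E_deriv n, mul_div_assoc]
  · intro i hi hne
    rw [it_const 2 i hne]
    ring
  · intro h0
    simp at h0

lemma sq_eq (r : ℝ) (m : ℕ) (hrm : r + r = (m : ℝ)) (n : ℕ) (hn : n ≠ 0) :
    ∑ i ∈ Finset.range (n + 1), (n.choose i : ℝ)
        * iteratedDeriv i (fun z => fk r z * fk r z) 0 * iteratedDeriv (n - i) (Q m) 0 = 0 := by
  rw [← iteratedDeriv_mul' n _ _ ((hfk_cd r).mul (hfk_cd r)) (hQ m) 0]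
  have hone : (fun z : ℝ => fk r z * fk r z * Q m z) = fun _ : ℝ => (1:ℝ) :=
    funext fun z => fk_sq r m hrm z
  rw [show (fun z : ℝ => (fun z : ℝ => fk r z * fk r z) z * Q m z)
      = fun z : ℝ => fk r z * fk r z * Q m z from rfl, hone]
  exact it_const 1 n hn 0

lemma Q_zero (m : ℕ) : Q m 0 = 1 := by
  rw [Q, E_zero]; norm_num

lemma hQ1_1 : deriv (Q 1) 0 = (1/3 : ℝ) := by
  rw [← iteratedDeriv_one, Q1_deriv]; norm_num [Nat.factorial]

lemma hQ1_2 : iteratedDeriv 2 (Q 1) 0 = (1/6 : ℝ) := by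
  rw [Q1_deriv]; norm_num [Nat.factorial]

lemma hQ1_3 : iteratedDeriv 3 (Q 1) 0 = (1/10 : ℝ) := by
  rw [Q1_deriv]; norm_num [Nat.factorial]

lemma hQ1_4 : iteratedDeriv 4 (Q 1) 0 = (1/15 : ℝ) := by
  rw [Q1_deriv]; norm_num [Nat.factorial]

lemma hQ1_5 : iteratedDeriv 5 (Q 1) 0 = (1/21 : ℝ) := by
  rw [Q1_deriv]; norm_num [Nat.factorial]

lemma hQ1_6 : iteratedDeriv 6 (Q 1) 0 = (1/28 : ℝ) := by
  rw [Q1_deriv]; norm_num [Nat.factorial]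

lemma hQ2_1 : deriv (Q 2) 0 = (2/3 : ℝ) := by
  have h := iteratedDeriv_mul' 1 (Q 1) (Q 1) (hQ 1) (hQ 1) 0
  rw [show (fun z => Q 1 z * Q 1 z) = Q 2 from (Q_mul 1 1).symm] at h
  simp [Finset.sum_range_succ, Nat.choose, Q_zero, hQ1_1] at h
  linarith [h]

lemma hQ2_2 : iteratedDeriv 2 (Q 2) 0 = (5/9 : ℝ) := by
  have h := iteratedDeriv_mul' 2 (Q 1) (Q 1) (hQ 1) (hQ 1) 0
  rw [show (fun z => Q 1 z * Q 1 z) = Q 2 from (Q_mul 1 1).symm] at h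
  simp [Finset.sum_range_succ, Nat.choose, Q_zero, hQ1_1, hQ1_2] at h
  linarith [h]

lemma hQ2_3 : iteratedDeriv 3 (Q 2) 0 = (8/15 : ℝ) := by
  have h := iteratedDeriv_mul' 3 (Q 1) (Q 1) (hQ 1) (hQ 1) 0
  rw [show (fun z => Q 1 z * Q 1 z) = Q 2 from (Q_mul 1 1).symm] at h
  simp [Finset.sum_range_succ, Nat.choose, Q_zero, hQ1_1, hQ1_2, hQ1_3] at h
  linarith [h]

lemma hQ2_4 : iteratedDeriv 4 (Q 2) 0 = (17/30 : ℝ) := by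
  have h := iteratedDeriv_mul' 4 (Q 1) (Q 1) (hQ 1) (hQ 1) 0
  rw [show (fun z => Q 1 z * Q 1 z) = Q 2 from (Q_mul 1 1).symm] at h
  simp [Finset.sum_range_succ, Nat.choose, Q_zero, hQ1_1, hQ1_2, hQ1_3, hQ1_4] at h
  linarith [h]

lemma hQ2_5 : iteratedDeriv 5 (Q 2) 0 = (41/63 : ℝ) := by
  have h := iteratedDeriv_mul' 5 (Q 1) (Q 1) (hQ 1) (hQ 1) 0
  rw [show (fun z => Q 1 z * Q 1 z) = Q 2 from (Q_mul 1 1).symm] at h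
  simp [Finset.sum_range_succ, Nat.choose, Q_zero, hQ1_1, hQ1_2, hQ1_3, hQ1_4, hQ1_5] at h
  linarith [h]

lemma hQ2_6 : iteratedDeriv 6 (Q 2) 0 = (167/210 : ℝ) := by
  have h := iteratedDeriv_mul' 6 (Q 1) (Q 1) (hQ 1) (hQ 1) 0
  rw [show (fun z => Q 1 z * Q 1 z) = Q 2 from (Q_mul 1 1).symm] at h
  simp [Finset.sum_range_succ, Nat.choose, Q_zero, hQ1_1, hQ1_2, hQ1_3, hQ1_4, hQ1_5, hQ1_6] at h
  linarith [h]

lemma hQ3_1 : deriv (Q 3) 0 = (1 : ℝ) := by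
  have h := iteratedDeriv_mul' 1 (Q 2) (Q 1) (hQ 2) (hQ 1) 0
  rw [show (fun z => Q 2 z * Q 1 z) = Q 3 from (Q_mul 2 1).symm] at h
  simp [Finset.sum_range_succ, Nat.choose, Q_zero, hQ1_1, hQ2_1] at h
  linarith [h]

lemma hQ3_2 : iteratedDeriv 2 (Q 3) 0 = (7/6 : ℝ) := by
  have h := iteratedDeriv_mul' 2 (Q 2) (Q 1) (hQ 2) (hQ 1) 0
  rw [show (fun z => Q 2 z * Q 1 z) = Q 3 from (Q_mul 2 1).symm] at h
  simp [Finset.sum_range_succ, Nat.choose, Q_zero, hQ1_1, hQ1_2, hQ2_1, hQ2_2] at h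
  linarith [h]

lemma hQ3_3 : iteratedDeriv 3 (Q 3) 0 = (137/90 : ℝ) := by
  have h := iteratedDeriv_mul' 3 (Q 2) (Q 1) (hQ 2) (hQ 1) 0
  rw [show (fun z => Q 2 z * Q 1 z) = Q 3 from (Q_mul 2 1).symm] at h
  simp [Finset.sum_range_succ, Nat.choose, Q_zero, hQ1_1, hQ1_2, hQ1_3, hQ2_1, hQ2_2, hQ2_3] at h
  linarith [h]

lemma hQ3_4 : iteratedDeriv 4 (Q 3) 0 = (13/6 : ℝ) := by
  have h := iteratedDeriv_mul' 4 (Q 2) (Q 1) (hQ 2) (hQ 1) 0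
  rw [show (fun z => Q 2 z * Q 1 z) = Q 3 from (Q_mul 2 1).symm] at h
  simp [Finset.sum_range_succ, Nat.choose, Q_zero, hQ1_1, hQ1_2, hQ1_3, hQ1_4, hQ2_1, hQ2_2, hQ2_3, hQ2_4] at h
  linarith [h]

lemma hQ3_5 : iteratedDeriv 5 (Q 3) 0 = (139/42 : ℝ) := by
  have h := iteratedDeriv_mul' 5 (Q 2) (Q 1) (hQ 2) (hQ 1) 0
  rw [show (fun z => Q 2 z * Q 1 z) = Q 3 from (Q_mul 2 1).symm] at h
  simp [Finset.sum_range_succ, Nat.choose, Q_zero, hQ1_1, hQ1_2, hQ1_3, hQ1_4, hQ1_5, hQ2_1, hQ2_2, hQ2_3, hQ2_4, hQ2_5] at h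
  linarith [h]

lemma hQ3_6 : iteratedDeriv 6 (Q 3) 0 = (563/105 : ℝ) := by
  have h := iteratedDeriv_mul' 6 (Q 2) (Q 1) (hQ 2) (hQ 1) 0
  rw [show (fun z => Q 2 z * Q 1 z) = Q 3 from (Q_mul 2 1).symm] at h
  simp [Finset.sum_range_succ, Nat.choose, Q_zero, hQ1_1, hQ1_2, hQ1_3, hQ1_4, hQ1_5, hQ1_6, hQ2_1, hQ2_2, hQ2_3, hQ2_4, hQ2_5, hQ2_6] at h
  linarith [h]

lemma hQ5_1 : deriv (Q 5) 0 = (5/3 : ℝ) := by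
  have h := iteratedDeriv_mul' 1 (Q 3) (Q 2) (hQ 3) (hQ 2) 0
  rw [show (fun z => Q 3 z * Q 2 z) = Q 5 from (Q_mul 3 2).symm] at h
  simp [Finset.sum_range_succ, Nat.choose, Q_zero, hQ2_1, hQ3_1] at h
  linarith [h]

lemma hQ5_2 : iteratedDeriv 2 (Q 5) 0 = (55/18 : ℝ) := by
  have h := iteratedDeriv_mul' 2 (Q 3) (Q 2) (hQ 3) (hQ 2) 0
  rw [show (fun z => Q 3 z * Q 2 z) = Q 5 from (Q_mul 3 2).symm] at h
  simp [Finset.sum_range_succ, Nat.choose, Q_zero, hQ2_1, hQ2_2, hQ3_1, hQ3_2] at h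
  linarith [h]

lemma hQ5_3 : iteratedDeriv 3 (Q 5) 0 = (109/18 : ℝ) := by
  have h := iteratedDeriv_mul' 3 (Q 3) (Q 2) (hQ 3) (hQ 2) 0
  rw [show (fun z => Q 3 z * Q 2 z) = Q 5 from (Q_mul 3 2).symm] at h
  simp [Finset.sum_range_succ, Nat.choose, Q_zero, hQ2_1, hQ2_2, hQ2_3, hQ3_1, hQ3_2, hQ3_3] at h
  linarith [h]

lemma hQ5_4 : iteratedDeriv 4 (Q 5) 0 = (346/27 : ℝ) := by
  have h := iteratedDeriv_mul' 4 (Q 3) (Q 2) (hQ 3) (hQ 2) 0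
  rw [show (fun z => Q 3 z * Q 2 z) = Q 5 from (Q_mul 3 2).symm] at h
  simp [Finset.sum_range_succ, Nat.choose, Q_zero, hQ2_1, hQ2_2, hQ2_3, hQ2_4, hQ3_1, hQ3_2, hQ3_3, hQ3_4] at h
  linarith [h]

lemma hQ6_1 : deriv (Q 6) 0 = (2 : ℝ) := by
  have h := iteratedDeriv_mul' 1 (Q 3) (Q 3) (hQ 3) (hQ 3) 0
  rw [show (fun z => Q 3 z * Q 3 z) = Q 6 from (Q_mul 3 3).symm] at h
  simp [Finset.sum_range_succ, Nat.choose, Q_zero, hQ3_1] at h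
  linarith [h]

lemma hQ6_2 : iteratedDeriv 2 (Q 6) 0 = (13/3 : ℝ) := by
  have h := iteratedDeriv_mul' 2 (Q 3) (Q 3) (hQ 3) (hQ 3) 0
  rw [show (fun z => Q 3 z * Q 3 z) = Q 6 from (Q_mul 3 3).symm] at h
  simp [Finset.sum_range_succ, Nat.choose, Q_zero, hQ3_1, hQ3_2] at h
  linarith [h]

lemma hQ6_3 : iteratedDeriv 3 (Q 6) 0 = (452/45 : ℝ) := by
  have h := iteratedDeriv_mul' 3 (Q 3) (Q 3) (hQ 3) (hQ 3) 0
  rw [show (fun z => Q 3 z * Q 3 z) = Q 6 from (Q_mul 3 3).symm] at h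
  simp [Finset.sum_range_succ, Nat.choose, Q_zero, hQ3_1, hQ3_2, hQ3_3] at h
  linarith [h]

lemma hQ6_4 : iteratedDeriv 4 (Q 6) 0 = (2221/90 : ℝ) := by
  have h := iteratedDeriv_mul' 4 (Q 3) (Q 3) (hQ 3) (hQ 3) 0
  rw [show (fun z => Q 3 z * Q 3 z) = Q 6 from (Q_mul 3 3).symm] at h
  simp [Finset.sum_range_succ, Nat.choose, Q_zero, hQ3_1, hQ3_2, hQ3_3, hQ3_4] at h
  linarith [h]

lemma hQ6_5 : iteratedDeriv 5 (Q 6) 0 = (12059/189 : ℝ) := by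
  have h := iteratedDeriv_mul' 5 (Q 3) (Q 3) (hQ 3) (hQ 3) 0
  rw [show (fun z => Q 3 z * Q 3 z) = Q 6 from (Q_mul 3 3).symm] at h
  simp [Finset.sum_range_succ, Nat.choose, Q_zero, hQ3_1, hQ3_2, hQ3_3, hQ3_4, hQ3_5] at h
  linarith [h]

lemma hQ6_6 : iteratedDeriv 6 (Q 6) 0 = (195745/1134 : ℝ) := by
  have h := iteratedDeriv_mul' 6 (Q 3) (Q 3) (hQ 3) (hQ 3) 0
  rw [show (fun z => Q 3 z * Q 3 z) = Q 6 from (Q_mul 3 3).symm] at h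
  simp [Finset.sum_range_succ, Nat.choose, Q_zero, hQ3_1, hQ3_2, hQ3_3, hQ3_4, hQ3_5, hQ3_6] at h
  linarith [h]

lemma hQ7_1 : deriv (Q 7) 0 = (7/3 : ℝ) := by
  have h := iteratedDeriv_mul' 1 (Q 6) (Q 1) (hQ 6) (hQ 1) 0
  rw [show (fun z => Q 6 z * Q 1 z) = Q 7 from (Q_mul 6 1).symm] at h
  simp [Finset.sum_range_succ, Nat.choose, Q_zero, hQ1_1, hQ6_1] at h
  linarith [h]

lemma hQ7_2 : iteratedDeriv 2 (Q 7) 0 = (35/6 : ℝ) := by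
  have h := iteratedDeriv_mul' 2 (Q 6) (Q 1) (hQ 6) (hQ 1) 0
  rw [show (fun z => Q 6 z * Q 1 z) = Q 7 from (Q_mul 6 1).symm] at h
  simp [Finset.sum_range_succ, Nat.choose, Q_zero, hQ1_1, hQ1_2, hQ6_1, hQ6_2] at h
  linarith [h]

lemma hQ7_3 : iteratedDeriv 3 (Q 7) 0 = (1393/90 : ℝ) := by
  have h := iteratedDeriv_mul' 3 (Q 6) (Q 1) (hQ 6) (hQ 1) 0
  rw [show (fun z => Q 6 z * Q 1 z) = Q 7 from (Q_mul 6 1).symm] at h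
  simp [Finset.sum_range_succ, Nat.choose, Q_zero, hQ1_1, hQ1_2, hQ1_3, hQ6_1, hQ6_2, hQ6_3] at h
  linarith [h]

lemma hQ7_4 : iteratedDeriv 4 (Q 7) 0 = (11683/270 : ℝ) := by
  have h := iteratedDeriv_mul' 4 (Q 6) (Q 1) (hQ 6) (hQ 1) 0
  rw [show (fun z => Q 6 z * Q 1 z) = Q 7 from (Q_mul 6 1).symm] at h
  simp [Finset.sum_range_succ, Nat.choose, Q_zero, hQ1_1, hQ1_2, hQ1_3, hQ1_4, hQ6_1, hQ6_2, hQ6_3, hQ6_4] at h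
  linarith [h]

lemma hQ7_5 : iteratedDeriv 5 (Q 7) 0 = (2281/18 : ℝ) := by
  have h := iteratedDeriv_mul' 5 (Q 6) (Q 1) (hQ 6) (hQ 1) 0
  rw [show (fun z => Q 6 z * Q 1 z) = Q 7 from (Q_mul 6 1).symm] at h
  simp [Finset.sum_range_succ, Nat.choose, Q_zero, hQ1_1, hQ1_2, hQ1_3, hQ1_4, hQ1_5, hQ6_1, hQ6_2, hQ6_3, hQ6_4, hQ6_5] at h
  linarith [h]

lemma hQ7_6 : iteratedDeriv 6 (Q 7) 0 = (313427/810 : ℝ) := by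
  have h := iteratedDeriv_mul' 6 (Q 6) (Q 1) (hQ 6) (hQ 1) 0
  rw [show (fun z => Q 6 z * Q 1 z) = Q 7 from (Q_mul 6 1).symm] at h
  simp [Finset.sum_range_succ, Nat.choose, Q_zero, hQ1_1, hQ1_2, hQ1_3, hQ1_4, hQ1_5, hQ1_6, hQ6_1, hQ6_2, hQ6_3, hQ6_4, hQ6_5, hQ6_6] at h
  linarith [h]

lemma hFF_k1_1 : deriv (fun z => fk (3/2 : ℝ) z * fk (3/2 : ℝ) z) 0 = (-1 : ℝ) := by
  have h := sq_eq (3/2 : ℝ) 3 (by norm_num) 1 (by norm_num)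
  simp [Finset.sum_range_succ, Nat.choose, Q_zero, fk_zero, hQ3_1] at h
  linarith [h]

lemma hu_k1_1 : deriv (fk (3/2 : ℝ)) 0 = (-1/2 : ℝ) := by
  have h := iteratedDeriv_mul' 1 (fk (3/2 : ℝ)) (fk (3/2 : ℝ)) (hfk_cd _) (hfk_cd _) 0
  rw [iteratedDeriv_one, hFF_k1_1] at h
  simp [Finset.sum_range_succ, Nat.choose, fk_zero] at h
  linarith [h]

lemma hFF_k1_2 : iteratedDeriv 2 (fun z => fk (3/2 : ℝ) z * fk (3/2 : ℝ) z) 0 = (5/6 : ℝ) := by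
  have h := sq_eq (3/2 : ℝ) 3 (by norm_num) 2 (by norm_num)
  simp [Finset.sum_range_succ, Nat.choose, Q_zero, fk_zero, hFF_k1_1, hQ3_1, hQ3_2] at h
  linarith [h]

lemma hu_k1_2 : iteratedDeriv 2 (fk (3/2 : ℝ)) 0 = (1/6 : ℝ) := by
  have h := iteratedDeriv_mul' 2 (fk (3/2 : ℝ)) (fk (3/2 : ℝ)) (hfk_cd _) (hfk_cd _) 0
  rw [hFF_k1_2] at h
  simp [Finset.sum_range_succ, Nat.choose, fk_zero, hu_k1_1] at h
  linarith [h]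

lemma hFF_k2_1 : deriv (fun z => fk (5/2 : ℝ) z * fk (5/2 : ℝ) z) 0 = (-5/3 : ℝ) := by
  have h := sq_eq (5/2 : ℝ) 5 (by norm_num) 1 (by norm_num)
  simp [Finset.sum_range_succ, Nat.choose, Q_zero, fk_zero, hQ5_1] at h
  linarith [h]

lemma hu_k2_1 : deriv (fk (5/2 : ℝ)) 0 = (-5/6 : ℝ) := by
  have h := iteratedDeriv_mul' 1 (fk (5/2 : ℝ)) (fk (5/2 : ℝ)) (hfk_cd _) (hfk_cd _) 0
  rw [iteratedDeriv_one, hFF_k2_1] at h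
  simp [Finset.sum_range_succ, Nat.choose, fk_zero] at h
  linarith [h]

lemma hFF_k2_2 : iteratedDeriv 2 (fun z => fk (5/2 : ℝ) z * fk (5/2 : ℝ) z) 0 = (5/2 : ℝ) := by
  have h := sq_eq (5/2 : ℝ) 5 (by norm_num) 2 (by norm_num)
  simp [Finset.sum_range_succ, Nat.choose, Q_zero, fk_zero, hFF_k2_1, hQ5_1, hQ5_2] at h
  linarith [h]

lemma hu_k2_2 : iteratedDeriv 2 (fk (5/2 : ℝ)) 0 = (5/9 : ℝ) := by
  have h := iteratedDeriv_mul' 2 (fk (5/2 : ℝ)) (fk (5/2 : ℝ)) (hfk_cd _) (hfk_cd _) 0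
  rw [hFF_k2_2] at h
  simp [Finset.sum_range_succ, Nat.choose, fk_zero, hu_k2_1] at h
  linarith [h]

lemma hFF_k2_3 : iteratedDeriv 3 (fun z => fk (5/2 : ℝ) z * fk (5/2 : ℝ) z) 0 = (-59/18 : ℝ) := by
  have h := sq_eq (5/2 : ℝ) 5 (by norm_num) 3 (by norm_num)
  simp [Finset.sum_range_succ, Nat.choose, Q_zero, fk_zero, hFF_k2_1, hFF_k2_2, hQ5_1, hQ5_2, hQ5_3] at h
  linarith [h]

lemma hu_k2_3 : iteratedDeriv 3 (fk (5/2 : ℝ)) 0 = (-1/4 : ℝ) := by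
  have h := iteratedDeriv_mul' 3 (fk (5/2 : ℝ)) (fk (5/2 : ℝ)) (hfk_cd _) (hfk_cd _) 0
  rw [hFF_k2_3] at h
  simp [Finset.sum_range_succ, Nat.choose, fk_zero, hu_k2_1, hu_k2_2] at h
  linarith [h]

lemma hFF_k2_4 : iteratedDeriv 4 (fun z => fk (5/2 : ℝ) z * fk (5/2 : ℝ) z) 0 = (193/54 : ℝ) := by
  have h := sq_eq (5/2 : ℝ) 5 (by norm_num) 4 (by norm_num)
  simp [Finset.sum_range_succ, Nat.choose, Q_zero, fk_zero, hFF_k2_1, hFF_k2_2, hFF_k2_3, hQ5_1, hQ5_2, hQ5_3, hQ5_4] at h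
  linarith [h]

lemma hu_k2_4 : iteratedDeriv 4 (fk (5/2 : ℝ)) 0 = (1/36 : ℝ) := by
  have h := iteratedDeriv_mul' 4 (fk (5/2 : ℝ)) (fk (5/2 : ℝ)) (hfk_cd _) (hfk_cd _) 0
  rw [hFF_k2_4] at h
  simp [Finset.sum_range_succ, Nat.choose, fk_zero, hu_k2_1, hu_k2_2, hu_k2_3] at h
  linarith [h]

lemma hFF_k3_1 : deriv (fun z => fk (7/2 : ℝ) z * fk (7/2 : ℝ) z) 0 = (-7/3 : ℝ) := by
  have h := sq_eq (7/2 : ℝ) 7 (by norm_num) 1 (by norm_num)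
  simp [Finset.sum_range_succ, Nat.choose, Q_zero, fk_zero, hQ7_1] at h
  linarith [h]

lemma hu_k3_1 : deriv (fk (7/2 : ℝ)) 0 = (-7/6 : ℝ) := by
  have h := iteratedDeriv_mul' 1 (fk (7/2 : ℝ)) (fk (7/2 : ℝ)) (hfk_cd _) (hfk_cd _) 0
  rw [iteratedDeriv_one, hFF_k3_1] at h
  simp [Finset.sum_range_succ, Nat.choose, fk_zero] at h
  linarith [h]

lemma hFF_k3_2 : iteratedDeriv 2 (fun z => fk (7/2 : ℝ) z * fk (7/2 : ℝ) z) 0 = (91/18 : ℝ) := by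
  have h := sq_eq (7/2 : ℝ) 7 (by norm_num) 2 (by norm_num)
  simp [Finset.sum_range_succ, Nat.choose, Q_zero, fk_zero, hFF_k3_1, hQ7_1, hQ7_2] at h
  linarith [h]

lemma hu_k3_2 : iteratedDeriv 2 (fk (7/2 : ℝ)) 0 = (7/6 : ℝ) := by
  have h := iteratedDeriv_mul' 2 (fk (7/2 : ℝ)) (fk (7/2 : ℝ)) (hfk_cd _) (hfk_cd _) 0
  rw [hFF_k3_2] at h
  simp [Finset.sum_range_succ, Nat.choose, fk_zero, hu_k3_1] at h
  linarith [h]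

lemma hFF_k3_3 : iteratedDeriv 3 (fun z => fk (7/2 : ℝ) z * fk (7/2 : ℝ) z) 0 = (-301/30 : ℝ) := by
  have h := sq_eq (7/2 : ℝ) 7 (by norm_num) 3 (by norm_num)
  simp [Finset.sum_range_succ, Nat.choose, Q_zero, fk_zero, hFF_k3_1, hFF_k3_2, hQ7_1, hQ7_2, hQ7_3] at h
  linarith [h]

lemma hu_k3_3 : iteratedDeriv 3 (fk (7/2 : ℝ)) 0 = (-14/15 : ℝ) := by
  have h := iteratedDeriv_mul' 3 (fk (7/2 : ℝ)) (fk (7/2 : ℝ)) (hfk_cd _) (hfk_cd _) 0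
  rw [hFF_k3_3] at h
  simp [Finset.sum_range_succ, Nat.choose, fk_zero, hu_k3_1, hu_k3_2] at h
  linarith [h]

lemma hFF_k3_4 : iteratedDeriv 4 (fun z => fk (7/2 : ℝ) z * fk (7/2 : ℝ) z) 0 = (161/9 : ℝ) := by
  have h := sq_eq (7/2 : ℝ) 7 (by norm_num) 4 (by norm_num)
  simp [Finset.sum_range_succ, Nat.choose, Q_zero, fk_zero, hFF_k3_1, hFF_k3_2, hFF_k3_3, hQ7_1, hQ7_2, hQ7_3, hQ7_4] at h
  linarith [h]

lemma hu_k3_4 : iteratedDeriv 4 (fk (7/2 : ℝ)) 0 = (91/180 : ℝ) := by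
  have h := iteratedDeriv_mul' 4 (fk (7/2 : ℝ)) (fk (7/2 : ℝ)) (hfk_cd _) (hfk_cd _) 0
  rw [hFF_k3_4] at h
  simp [Finset.sum_range_succ, Nat.choose, fk_zero, hu_k3_1, hu_k3_2, hu_k3_3] at h
  linarith [h]

lemma hFF_k3_5 : iteratedDeriv 5 (fun z => fk (7/2 : ℝ) z * fk (7/2 : ℝ) z) 0 = (-751/27 : ℝ) := by
  have h := sq_eq (7/2 : ℝ) 7 (by norm_num) 5 (by norm_num)
  simp [Finset.sum_range_succ, Nat.choose, Q_zero, fk_zero, hFF_k3_1, hFF_k3_2, hFF_k3_3, hFF_k3_4, hQ7_1, hQ7_2, hQ7_3, hQ7_4, hQ7_5] at h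
  linarith [h]

lemma hu_k3_5 : iteratedDeriv 5 (fk (7/2 : ℝ)) 0 = (-5/72 : ℝ) := by
  have h := iteratedDeriv_mul' 5 (fk (7/2 : ℝ)) (fk (7/2 : ℝ)) (hfk_cd _) (hfk_cd _) 0
  rw [hFF_k3_5] at h
  simp [Finset.sum_range_succ, Nat.choose, fk_zero, hu_k3_1, hu_k3_2, hu_k3_3, hu_k3_4] at h
  linarith [h]

lemma hFF_k3_6 : iteratedDeriv 6 (fun z => fk (7/2 : ℝ) z * fk (7/2 : ℝ) z) 0 = (19349/540 : ℝ) := by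
  have h := sq_eq (7/2 : ℝ) 7 (by norm_num) 6 (by norm_num)
  simp [Finset.sum_range_succ, Nat.choose, Q_zero, fk_zero, hFF_k3_1, hFF_k3_2, hFF_k3_3, hFF_k3_4, hFF_k3_5, hQ7_1, hQ7_2, hQ7_3, hQ7_4, hQ7_5, hQ7_6] at h
  linarith [h]

lemma hu_k3_6 : iteratedDeriv 6 (fk (7/2 : ℝ)) 0 = (-139/1080 : ℝ) := by
  have h := iteratedDeriv_mul' 6 (fk (7/2 : ℝ)) (fk (7/2 : ℝ)) (hfk_cd _) (hfk_cd _) 0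
  rw [hFF_k3_6] at h
  simp [Finset.sum_range_succ, Nat.choose, fk_zero, hu_k3_1, hu_k3_2, hu_k3_3, hu_k3_4, hu_k3_5] at h
  linarith [h]


lemma main_k (k : ℕ) :
    (fun z : ℝ => (if z = 0 then (1:ℝ) else z ^ 2 / (2 * (Real.exp z - 1 - z)))
      ^ ((k : ℝ) + 1 / 2)) = fk ((k : ℝ) + 1 / 2) := by
  funext z
  rw [fk, base_eq z]

theorem a_values : a 0 = 1 ∧ a 1 = 1 / 12 ∧ a 2 = 1 / 288 ∧ a 3 = -139 / 51840 := by
  refine ⟨?_, ?_, ?_, ?_⟩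
  · rw [a, main_k 0]
    rw [show (2 * 0 : ℕ) = 0 from rfl, iteratedDeriv_zero, fk_zero]
    norm_num
  · rw [a, main_k 1]
    rw [show ((1 : ℕ) : ℝ) + 1 / 2 = (3/2 : ℝ) by norm_num]
    rw [show (2 * 1 : ℕ) = 2 from rfl, hu_k1_2]
    norm_num [Nat.factorial]
  · rw [a, main_k 2]
    rw [show ((2 : ℕ) : ℝ) + 1 / 2 = (5/2 : ℝ) by norm_num]
    rw [show (2 * 2 : ℕ) = 4 from rfl, hu_k2_4]
    norm_num [Nat.factorial]
  · rw [a, main_k 3]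
    rw [show ((3 : ℕ) : ℝ) + 1 / 2 = (7/2 : ℝ) by norm_num]
    rw [show (2 * 3 : ℕ) = 6 from rfl, hu_k3_6]
    norm_num [Nat.factorial]
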